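/- arXiv:2103.16598 — 3 statements merged into one kernel-verified Lean document; each statement's English description precedes it below -/
import Mathlib

section
/- For all x, y ∈ ℝ^N and t > 0, the Mehler kernel M_t(x,y) := (1 - e^{-2t})^{-N/2} exp( -(e^{-2t}|x|² - 2e^{-t} x·y + e^{-2t}|y|²) / (2(1 - e^{-2t})) ) satisfies M_t(x,y) ≥ (2π)^{N/2} H_t(|x-y|), where H_t(r) := (4πt)^{-N/2} e^{-r²/(4t)} is the Gauss–Weierstrass kernel. -/
open Real
open scoped RealInnerProductSpace

/-- The Mehler kernel of the Ornstein-Uhlenbeck semigroup on ℝ^N. -/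
noncomputable def mehler (N : ℕ) (t : ℝ) (x y : EuclideanSpace ℝ (Fin N)) : ℝ :=
  (1 - exp (-2 * t)) ^ (-(N:ℝ)/2) *
    exp (-(exp (-2 * t) * ‖x‖^2 - 2 * exp (-t) * ⟪x, y⟫ + exp (-2 * t) * ‖y‖^2) /
      (2 * (1 - exp (-2 * t))))

/-- The Gauss–Weierstrass heat kernel on ℝ^N. -/
noncomputable def gaussWeierstrass (N : ℕ) (t r : ℝ) : ℝ :=
  (4 * π * t) ^ (-(N:ℝ)/2) * exp (-r^2 / (4 * t))

theorem mehler_ge_heat_kernel (N : ℕ) (x y : EuclideanSpace ℝ (Fin N)) (t : ℝ) (ht : 0 < t) :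
    mehler N t x y ≥ (2 * π) ^ ((N:ℝ)/2) * gaussWeierstrass N t ‖x - y‖ := by
  have hπ : (0:ℝ) < π := Real.pi_pos
  set r := ‖x - y‖ with hr
  have h2t : (0:ℝ) < 2 * t := by linarith
  have hu1 : exp (-2 * t) < 1 := by
    rw [exp_lt_one_iff]; linarith
  have hupos : (0:ℝ) < 1 - exp (-2 * t) := by linarith
  have hule : 1 - exp (-2 * t) ≤ 2 * t := by
    nlinarith [Real.add_one_le_exp (-2 * t)]
  have hRHS : (2 * π) ^ ((N:ℝ)/2) * gaussWeierstrass N t r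
      = (2 * t) ^ (-(N:ℝ)/2) * exp (-r^2 / (4 * t)) := by
    unfold gaussWeierstrass
    have hs : ((2 * π) * (2 * t)) ^ (-(N:ℝ)/2)
        = (2 * π) ^ (-(N:ℝ)/2) * (2 * t) ^ (-(N:ℝ)/2) :=
      Real.mul_rpow (by positivity) (by positivity)
    rw [show (4:ℝ) * π * t = (2 * π) * (2 * t) by ring, hs, ← mul_assoc, ← mul_assoc,
      ← Real.rpow_add (by positivity : (0:ℝ) < 2 * π)]
    rw [show (N:ℝ)/2 + -(N:ℝ)/2 = 0 by ring, Real.rpow_zero, one_mul]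
  rw [hRHS]
  have hbase : (2 * t) ^ (-(N:ℝ)/2) ≤ (1 - exp (-2 * t)) ^ (-(N:ℝ)/2) := by
    rw [show -(N:ℝ)/2 = -((N:ℝ)/2) by ring, Real.rpow_neg hupos.le, Real.rpow_neg h2t.le]
    exact inv_anti₀ (Real.rpow_pos_of_pos hupos _)
      (Real.rpow_le_rpow hupos.le hule (by positivity))
  have hA : exp (-2 * t) * ‖x‖^2 - 2 * exp (-t) * ⟪x, y⟫ + exp (-2 * t) * ‖y‖^2
      ≤ exp (-t) * r^2 := by
    have hnorm : r^2 = ‖x‖^2 - 2 * ⟪x, y⟫ + ‖y‖^2 := by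
      rw [hr]; exact norm_sub_sq_real x y
    have hee : exp (-2 * t) ≤ exp (-t) := exp_le_exp.mpr (by linarith)
    nlinarith [sq_nonneg ‖x‖, sq_nonneg ‖y‖]
  have hkey : 4 * t * exp (-t) ≤ 2 * (1 - exp (-2 * t)) := by
    have hsinh : t ≤ Real.sinh t := Real.self_le_sinh_iff.mpr ht.le
    rw [Real.sinh_eq] at hsinh
    have h1 : exp t * exp (-t) = 1 := by rw [← Real.exp_add]; norm_num
    have h2 : exp (-t) * exp (-t) = exp (-2 * t) := by rw [← Real.exp_add]; ring_nf
    nlinarith [Real.exp_pos (-t)]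
  have hexp : exp (-r^2 / (4 * t)) ≤
      exp (-(exp (-2 * t) * ‖x‖^2 - 2 * exp (-t) * ⟪x, y⟫ + exp (-2 * t) * ‖y‖^2) /
        (2 * (1 - exp (-2 * t)))) := by
    apply Real.exp_le_exp.mpr
    rw [neg_div, neg_div, neg_le_neg_iff, div_le_div_iff₀ (by positivity) (by positivity)]
    nlinarith [hA, hkey, sq_nonneg r, ht, Real.exp_pos (-t),
      mul_le_mul_of_nonneg_left hkey (sq_nonneg r),
      mul_le_mul_of_nonneg_right hA h2t.le]
  unfold mehler
  exact mul_le_mul hbase hexp (Real.exp_pos _).le (Real.rpow_pos_of_pos hupos _).le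
end

section
/- For every s ∈ (0,1) and all x ≠ y in ℝ^N, the kernel K_s(x,y) := ∫_0^∞ M_t(x,y) t^{-(s/2+1)} dt satisfies K_s(x,y) ≥ C_{N,s} |x-y|^{-(N+s)}, where C_{N,s} := 2^{s + N/2} Γ((s+N)/2). -/
open Real MeasureTheory
open scoped RealInnerProductSpace

/-- The fractional Gaussian kernel given by Bochner subordination. -/
noncomputable def fracKernel (N : ℕ) (s : ℝ) (x y : EuclideanSpace ℝ (Fin N)) : ℝ :=
  ∫ t in Set.Ioi (0:ℝ), mehler N t x y / t ^ (s/2 + 1)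

open Set

lemma aux_gamma {a c : ℝ} (ha : 0 < a) (hc : 0 < c) :
    ∫ t in Ioi (0:ℝ), t ^ (-a - 1) * Real.exp (-(c / t)) = (1/c) ^ a * Real.Gamma a := by
  rw [← Real.integral_rpow_mul_exp_neg_mul_Ioi ha hc,
    ← integral_comp_rpow_Ioi (fun u => u ^ (a-1) * Real.exp (-(c*u))) (p := -1) (by norm_num)]
  refine setIntegral_congr_fun measurableSet_Ioi fun t ht => ?_
  have ht0 : (0:ℝ) < t := ht
  have h1 : t ^ (-1 : ℝ) = t⁻¹ := Real.rpow_neg_one t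
  rw [smul_eq_mul, h1, Real.inv_rpow ht0.le, ← Real.rpow_neg ht0.le]
  rw [abs_neg, abs_one, one_mul, ← mul_assoc, ← Real.rpow_add ht0]
  rw [← div_eq_mul_inv]
  congr 1
  congr 1
  ring

lemma oneSubExp_pos {t : ℝ} (ht : 0 < t) : 0 < 1 - Real.exp (-2*t) := by
  have : Real.exp (-2*t) < 1 := Real.exp_lt_one_iff.mpr (by linarith)
  linarith

lemma mehler_nonneg (N : ℕ) {t : ℝ} (ht : 0 < t) (x y : EuclideanSpace ℝ (Fin N)) :
    0 ≤ mehler N t x y := by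
  have := oneSubExp_pos ht
  unfold mehler
  positivity

lemma mehler_ge (N : ℕ) {t : ℝ} (ht : 0 < t) (x y : EuclideanSpace ℝ (Fin N)) :
    (2*t) ^ (-(N:ℝ)/2) * Real.exp (-‖x - y‖^2 / (4*t)) ≤ mehler N t x y := by
  have ha : 0 < Real.exp (-t) := Real.exp_pos _
  have ha1 : Real.exp (-t) < 1 := Real.exp_lt_one_iff.mpr (by linarith)
  have ha2 : Real.exp (-2*t) = Real.exp (-t) ^ 2 := by
    rw [sq, ← Real.exp_add]; ring_nf
  set a := Real.exp (-t) with hadef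
  have h1 : 0 < 1 - a^2 := by nlinarith
  have h2 : 1 - a^2 ≤ 2*t := by
    have := Real.add_one_le_exp (-2*t)
    rw [ha2] at this; nlinarith
  have hnorm : ‖x - y‖^2 = ‖x‖^2 - 2 * ⟪x, y⟫ + ‖y‖^2 := norm_sub_sq_real x y
  have hprod : a * Real.exp t = 1 := by rw [hadef, ← Real.exp_add]; simp
  have hsinh : 2*t*a ≤ 1 - a^2 := by
    have hs := Real.self_le_sinh_iff.mpr ht.le
    rw [Real.sinh_eq] at hs
    nlinarith [Real.exp_pos t]
  have hQ : a^2 * ‖x‖^2 - 2*a*⟪x,y⟫ + a^2 * ‖y‖^2 ≤ a * ‖x - y‖^2 := by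
    nlinarith [mul_nonneg (mul_nonneg ha.le (by nlinarith : (0:ℝ) ≤ 1 - a))
      (by positivity : (0:ℝ) ≤ ‖x‖^2 + ‖y‖^2)]
  have hexp : -‖x - y‖^2 / (4*t) ≤
      -(a^2 * ‖x‖^2 - 2*a*⟪x,y⟫ + a^2 * ‖y‖^2) / (2*(1 - a^2)) := by
    rw [neg_div, neg_div, neg_le_neg_iff, div_le_div_iff₀ (by positivity) (by positivity)]
    nlinarith [mul_le_mul_of_nonneg_right hQ (by positivity : (0:ℝ) ≤ 4*t),
      mul_le_mul_of_nonneg_right hsinh (by positivity : (0:ℝ) ≤ 2*‖x - y‖^2)]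
  have hpow : (2*t) ^ (-(N:ℝ)/2) ≤ (1 - a^2) ^ (-(N:ℝ)/2) :=
    Real.rpow_le_rpow_of_nonpos h1 h2 (by rw [neg_div]; exact neg_nonpos.mpr (by positivity))
  unfold mehler
  rw [ha2, ← hadef]
  exact mul_le_mul hpow (Real.exp_le_exp.mpr hexp) (Real.exp_nonneg _)
    (Real.rpow_nonneg h1.le _)

lemma mehler_le (N : ℕ) {t : ℝ} (ht : 0 < t) (x y : EuclideanSpace ℝ (Fin N)) :
    mehler N t x y ≤ (1 - Real.exp (-2*t)) ^ (-(N:ℝ)/2) *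
      (Real.exp ((‖x‖^2 + ‖y‖^2)/2) *
        Real.exp (-(Real.exp (-t) * ‖x - y‖^2) / (2*(1 - Real.exp (-2*t))))) := by
  have ha : 0 < Real.exp (-t) := Real.exp_pos _
  have ha1 : Real.exp (-t) < 1 := Real.exp_lt_one_iff.mpr (by linarith)
  have ha2 : Real.exp (-2*t) = Real.exp (-t) ^ 2 := by
    rw [sq, ← Real.exp_add]; ring_nf
  set a := Real.exp (-t) with hadef
  have h1 : 0 < 1 - a^2 := by nlinarith
  have hnorm : ‖x - y‖^2 = ‖x‖^2 - 2 * ⟪x, y⟫ + ‖y‖^2 := norm_sub_sq_real x y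
  have hexp : -(a^2 * ‖x‖^2 - 2*a*⟪x,y⟫ + a^2 * ‖y‖^2) / (2*(1 - a^2)) ≤
      (‖x‖^2 + ‖y‖^2)/2 + -(a * ‖x - y‖^2) / (2*(1 - a^2)) := by
    have h3 : -(a^2 * ‖x‖^2 - 2*a*⟪x,y⟫ + a^2 * ‖y‖^2) / (2*(1 - a^2))
        - -(a * ‖x - y‖^2) / (2*(1 - a^2)) ≤ (‖x‖^2 + ‖y‖^2)/2 := by
      rw [div_sub_div_same, div_le_iff₀ (by positivity)]
      nlinarith [mul_nonneg (by nlinarith : (0:ℝ) ≤ 1 - a)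
        (by positivity : (0:ℝ) ≤ ‖x‖^2 + ‖y‖^2), ha.le]
    linarith
  unfold mehler
  rw [ha2, ← hadef, ← Real.exp_add]
  exact mul_le_mul_of_nonneg_left (Real.exp_le_exp.mpr hexp) (Real.rpow_nonneg h1.le _)


lemma oneSubExp_pos' {t : ℝ} (ht : 0 < t) : 0 < 1 - Real.exp (-2*t) := oneSubExp_pos ht

lemma F_continuousOn (N : ℕ) (s : ℝ) (x y : EuclideanSpace ℝ (Fin N)) :
    ContinuousOn (fun t => mehler N t x y / t ^ (s/2 + 1)) (Ioi (0:ℝ)) := by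
  have hne : ∀ t ∈ Ioi (0:ℝ), 1 - Real.exp (-2*t) ≠ 0 := fun t ht =>
    (oneSubExp_pos ht).ne'
  apply ContinuousOn.div
  · apply ContinuousOn.mul
    · exact (by fun_prop : Continuous fun t:ℝ => 1 - Real.exp (-2*t)).continuousOn.rpow_const
        (fun t ht => Or.inl (hne t ht))
    · apply Real.continuous_exp.comp_continuousOn
      apply ContinuousOn.div (by fun_prop) (by fun_prop)
      intro t ht
      exact mul_ne_zero two_ne_zero (hne t ht)
  · exact continuousOn_id.rpow_const (fun t ht => Or.inl (ne_of_gt ht))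
  · intro t ht
    exact (Real.rpow_pos_of_pos ht _).ne'

lemma F_integrable (N : ℕ) {s : ℝ} (hs0 : 0 < s) (hs1 : s < 1)
    (x y : EuclideanSpace ℝ (Fin N)) (hxy : x ≠ y) :
    IntegrableOn (fun t => mehler N t x y / t ^ (s/2 + 1)) (Ioi (0:ℝ)) := by
  have hr : 0 < ‖x - y‖ := by rwa [norm_sub_pos_iff]
  set r : ℝ := ‖x - y‖ with hrdef
  set K : ℝ := (‖x‖^2 + ‖y‖^2)/2 with hKdef
  have hsplit : Ioc (0:ℝ) 1 ∪ Ioi (1:ℝ) = Ioi 0 := Ioc_union_Ioi_eq_Ioi zero_le_one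
  rw [← hsplit]
  apply IntegrableOn.union
  · -- on Ioc 0 1
    set ε : ℝ := r^2 / (4 * Real.exp 1) with hεdef
    have hε : 0 < ε := by positivity
    set c3 : ℝ := (((N:ℝ)+1)/(Real.exp 1 * ε))^(N+1) with hc3def
    have hc3 : 0 ≤ c3 := by positivity
    set C2 : ℝ := (2*Real.exp (-2))^(-(N:ℝ)/2) * (Real.exp K * c3) with hC2def
    have hC2 : 0 ≤ C2 := by positivity
    have hdom : IntegrableOn (fun t : ℝ => C2 * t ^ (-s/2)) (Ioc (0:ℝ) 1) := by
      have : IntervalIntegrable (fun t : ℝ => t ^ (-s/2)) volume 0 1 :=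
        intervalIntegral.intervalIntegrable_rpow' (by linarith)
      rw [intervalIntegrable_iff_integrableOn_Ioc_of_le zero_le_one] at this
      exact this.const_mul C2
    apply Integrable.mono' hdom
      (((F_continuousOn N s x y).mono Ioc_subset_Ioi_self).aestronglyMeasurable measurableSet_Ioc)
    filter_upwards [ae_restrict_mem measurableSet_Ioc] with t ht
    obtain ⟨ht0, ht1⟩ := ht
    have htp : 0 < t ^ (s/2 + 1) := Real.rpow_pos_of_pos ht0 _
    rw [Real.norm_eq_abs, abs_of_nonneg (div_nonneg (mehler_nonneg N ht0 x y) htp.le)]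
    -- bound the rpow factor
    have hA : (1 - Real.exp (-2*t)) ^ (-(N:ℝ)/2) ≤
        (2*Real.exp (-2))^(-(N:ℝ)/2) * t ^ (-(N:ℝ)/2) := by
      rw [← Real.mul_rpow (by positivity) ht0.le]
      apply Real.rpow_le_rpow_of_nonpos (by positivity)
      · have h1 := Real.add_one_le_exp (2*t)
        have h2 : Real.exp (2*t) * Real.exp (-2*t) = 1 := by
          rw [← Real.exp_add]; simp
        have h3 : Real.exp (-2) ≤ Real.exp (-2*t) := Real.exp_le_exp.mpr (by linarith)
        nlinarith [Real.exp_pos (-2*t), Real.exp_pos (-2)]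
      · rw [neg_div]; exact neg_nonpos.mpr (by positivity)
    -- bound the exponential factor
    have ha : 0 < Real.exp (-t) := Real.exp_pos _
    have ha1 : Real.exp (-t) < 1 := Real.exp_lt_one_iff.mpr (by linarith)
    have h1 : 0 < 1 - Real.exp (-t)^2 := by nlinarith
    have ha2 : Real.exp (-2*t) = Real.exp (-t) ^ 2 := by rw [sq, ← Real.exp_add]; ring_nf
    have hosp : 0 < 1 - Real.exp (-2*t) := oneSubExp_pos ht0
    have h2t : 1 - Real.exp (-2*t) ≤ 2*t := by
      have := Real.add_one_le_exp (-2*t); linarith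
    have hεe : ε * (4 * Real.exp 1) = r^2 := by
      rw [hεdef]; field_simp
    have hae : 1 ≤ Real.exp (-t) * Real.exp 1 := by
      rw [← Real.exp_add]; exact Real.one_le_exp (by linarith)
    have hB : Real.exp (-(Real.exp (-t) * r^2) / (2*(1 - Real.exp (-2*t)))) ≤
        Real.exp (-(ε/t)) := by
      apply Real.exp_le_exp.mpr
      rw [neg_div, neg_le_neg_iff]
      rw [div_le_div_iff₀ ht0 (by positivity)]
      nlinarith [mul_nonneg (mul_nonneg (sub_nonneg.mpr hae) (sq_nonneg r)) ht0.le,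
        mul_le_mul_of_nonneg_left h2t hε.le, Real.exp_pos 1,
        mul_pos hε (Real.exp_pos 1)]
    have hu : 0 < ε/(((N:ℝ)+1)*t) := by positivity
    set u : ℝ := ε/(((N:ℝ)+1)*t) with hudef
    have h4a : Real.exp (-(ε/t)) = Real.exp (-u) ^ (N+1) := by
      rw [← Real.exp_nat_mul]
      congr 1
      rw [hudef]
      push_cast
      field_simp
    have h4b : Real.exp (-u) ≤ ((N:ℝ)+1)*t/(Real.exp 1 * ε) := by
      have h := Real.add_one_le_exp (u - 1)
      rw [Real.exp_sub] at h
      have h' : u * Real.exp 1 ≤ Real.exp u := by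
        rw [← le_div_iff₀ (Real.exp_pos 1)]; linarith
      rw [Real.exp_neg]
      refine (inv_anti₀ (by positivity) h').trans (le_of_eq ?_)
      rw [hudef]
      field_simp
    have hC : Real.exp (-(ε/t)) ≤ c3 * t^(N+1) := by
      rw [h4a, hc3def, ← mul_pow]
      apply pow_le_pow_left₀ (Real.exp_nonneg _)
      rw [div_mul_eq_mul_div]
      exact h4b
    have hm := mehler_le N ht0 x y
    rw [← hrdef] at hm
    calc mehler N t x y / t ^ (s/2+1)
        ≤ ((2*Real.exp (-2))^(-(N:ℝ)/2) * t^(-(N:ℝ)/2) *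
            (Real.exp K * (c3 * t^(N+1)))) / t ^ (s/2+1) := by
          apply div_le_div_of_nonneg_right ?_ htp.le
          refine hm.trans ?_
          apply mul_le_mul hA (mul_le_mul_of_nonneg_left (hB.trans hC) (Real.exp_nonneg _))
            (by positivity) (by positivity)
      _ = C2 * t ^ ((N:ℝ)/2 - s/2) := by
          have e1 : t^((N:ℝ)/2 - s/2) = t^(-(N:ℝ)/2) * t^((N:ℝ)+1) * t^(-(s/2+1)) := by
            rw [← Real.rpow_add ht0, ← Real.rpow_add ht0]; congr 1; ring
          have e2 : (t:ℝ)^(N+1) = t^((N:ℝ)+1) := by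
            rw [← Real.rpow_natCast t (N+1)]; norm_num
          have e3 : t^(-(s/2+1)) = (t^(s/2+1))⁻¹ := Real.rpow_neg ht0.le _
          rw [div_eq_mul_inv, hC2def, e1, e3, e2]
          ring
      _ ≤ C2 * t ^ (-s/2) := by
          apply mul_le_mul_of_nonneg_left ?_ hC2
          apply Real.rpow_le_rpow_of_exponent_ge ht0 ht1
          have : (0:ℝ) ≤ (N:ℝ) := Nat.cast_nonneg N
          linarith
  · -- on Ioi 1
    set C1 : ℝ := (1 - Real.exp (-2))^(-(N:ℝ)/2) * Real.exp K with hC1def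
    have hdom : IntegrableOn (fun t : ℝ => C1 * t ^ (-(s/2+1))) (Ioi (1:ℝ)) :=
      (integrableOn_Ioi_rpow_of_lt (by linarith) one_pos).const_mul C1
    apply Integrable.mono' hdom
      (((F_continuousOn N s x y).mono (Ioi_subset_Ioi zero_le_one)).aestronglyMeasurable
        measurableSet_Ioi)
    filter_upwards [ae_restrict_mem measurableSet_Ioi] with t ht
    have ht1 : (1:ℝ) < t := ht
    have ht0 : (0:ℝ) < t := by linarith
    have htp : 0 < t ^ (s/2 + 1) := Real.rpow_pos_of_pos ht0 _
    rw [Real.norm_eq_abs, abs_of_nonneg (div_nonneg (mehler_nonneg N ht0 x y) htp.le)]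
    have h2 := oneSubExp_pos ht0
    have hm := mehler_le N ht0 x y
    have hA : (1 - Real.exp (-2*t)) ^ (-(N:ℝ)/2) ≤ (1 - Real.exp (-2))^(-(N:ℝ)/2) := by
      apply Real.rpow_le_rpow_of_nonpos
      · have : Real.exp (-2) < 1 := Real.exp_lt_one_iff.mpr (by norm_num)
        linarith
      · have : Real.exp (-2*t) ≤ Real.exp (-2) := Real.exp_le_exp.mpr (by linarith)
        linarith
      · rw [neg_div]; exact neg_nonpos.mpr (by positivity)
    have hB : Real.exp (-(Real.exp (-t) * ‖x - y‖^2) / (2*(1 - Real.exp (-2*t)))) ≤ 1 := by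
      apply Real.exp_le_one_iff.mpr
      apply div_nonpos_of_nonpos_of_nonneg
      · simp only [neg_nonpos]
        positivity
      · positivity
    have hmC : mehler N t x y ≤ C1 := by
      calc mehler N t x y ≤ _ := hm
        _ ≤ (1 - Real.exp (-2))^(-(N:ℝ)/2) * (Real.exp K * 1) := by
            apply mul_le_mul hA (mul_le_mul_of_nonneg_left hB (Real.exp_nonneg _))
              (by positivity)
              (Real.rpow_nonneg (by
                have : Real.exp (-2) < 1 := Real.exp_lt_one_iff.mpr (by norm_num)
                linarith) _)
        _ = C1 := by rw [hC1def, mul_one]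
    calc mehler N t x y / t ^ (s/2+1) ≤ C1 / t ^ (s/2+1) := by gcongr
      _ = C1 * t ^ (-(s/2+1)) := by
          rw [Real.rpow_neg ht0.le, div_eq_mul_inv]

theorem fracKernel_lower_bound (N : ℕ) (s : ℝ) (hs : s ∈ Set.Ioo (0:ℝ) 1)
    (x y : EuclideanSpace ℝ (Fin N)) (hxy : x ≠ y) :
    fracKernel N s x y ≥
      2 ^ (s + (N:ℝ)/2) * Real.Gamma ((s + N) / 2) * ‖x - y‖ ^ (-((N:ℝ) + s)) := by
  obtain ⟨hs0, hs1⟩ := hs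
  have hr : 0 < ‖x - y‖ := by rwa [norm_sub_pos_iff]
  set r : ℝ := ‖x - y‖ with hrdef
  have hp : 0 < (s + (N:ℝ))/2 := by positivity
  have hc : 0 < r^2/4 := by positivity
  set f : ℝ → ℝ := fun t => 2^(-(N:ℝ)/2) *
    (t ^ (-((s+(N:ℝ))/2) - 1) * Real.exp (-(r^2/4 / t))) with hfdef
  have hint : ∫ t in Ioi (0:ℝ), f t =
      2 ^ (s + (N:ℝ)/2) * Real.Gamma ((s + N) / 2) * r ^ (-((N:ℝ) + s)) := by
    simp only [hfdef]
    rw [MeasureTheory.integral_const_mul, aux_gamma hp hc]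
    have h4 : (1/(r^2/4) : ℝ) = 4/r^2 := one_div_div _ _
    rw [h4, Real.div_rpow (by norm_num) (by positivity)]
    have h4p : (4:ℝ) ^ ((s+(N:ℝ))/2) = 2 ^ (s+(N:ℝ)) := by
      rw [show (4:ℝ) = (2:ℝ)^(2:ℕ) from by norm_num, ← Real.rpow_natCast (2:ℝ) 2,
        ← Real.rpow_mul (by norm_num : (0:ℝ) ≤ 2)]
      congr 1
      push_cast
      ring
    have hrp : (r^2 : ℝ) ^ ((s+(N:ℝ))/2) = r ^ (s+(N:ℝ)) := by
      rw [← Real.rpow_natCast r 2, ← Real.rpow_mul hr.le]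
      congr 1
      push_cast
      ring
    rw [h4p, hrp, show -((N:ℝ)+s) = -(s+(N:ℝ)) by ring, Real.rpow_neg hr.le (s+(N:ℝ))]
    have h2c : (2:ℝ)^(-(N:ℝ)/2) * 2^(s+(N:ℝ)) = 2^(s+(N:ℝ)/2) := by
      rw [← Real.rpow_add (by norm_num : (0:ℝ) < 2)]
      congr 1
      ring
    linear_combination Real.Gamma ((s+(N:ℝ))/2) * (r^(s+(N:ℝ)))⁻¹ * h2c
  have hFi := F_integrable N hs0 hs1 x y hxy
  have hmono : ∫ t in Ioi (0:ℝ), f t ≤ fracKernel N s x y := by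
    unfold fracKernel
    apply integral_mono_of_nonneg
    · filter_upwards [ae_restrict_mem measurableSet_Ioi] with t ht
      have ht0 : (0:ℝ) < t := ht
      simp only [hfdef]
      positivity
    · exact hFi
    · filter_upwards [ae_restrict_mem measurableSet_Ioi] with t ht
      have ht0 : (0:ℝ) < t := ht
      have hg := mehler_ge N ht0 x y
      rw [← hrdef] at hg
      have hfe : f t = ((2*t) ^ (-(N:ℝ)/2) * Real.exp (-r^2 / (4*t))) * (t ^ (s/2+1))⁻¹ := by
        simp only [hfdef]
        rw [Real.mul_rpow (by norm_num) ht0.le]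
        have e1 : t ^ (-((s+(N:ℝ))/2) - 1) = t ^ (-(N:ℝ)/2) * t^(-(s/2+1)) := by
          rw [← Real.rpow_add ht0]
          congr 1
          ring
        have e3 : t^(-(s/2+1)) = (t^(s/2+1))⁻¹ := Real.rpow_neg ht0.le _
        have e4 : (-(r^2/4/t) : ℝ) = -r^2/(4*t) := by ring
        rw [e1, e3, e4]
        ring
      rw [hfe, div_eq_mul_inv]
      exact mul_le_mul_of_nonneg_right hg (by positivity)
  rw [ge_iff_le, ← hint]
  exact hmono
end

section
/- For every s ∈ (0,1) and all x, y ∈ ℝ^N one has K_s(x,y) ≤ e^{|x|²/4} e^{|y|²/4} K̃_s(|x-y|), where K̃_s(r) := ∫_0^∞ exp( -e^t r² / (2(e^{2t}-1)) ) t^{-(s/2+1)} (1-e^{-2t})^{-N/2} dt. -/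
open Real MeasureTheory
open scoped RealInnerProductSpace

/-- The radial majorant kernel K̃_s. -/
noncomputable def radKernel (N : ℕ) (s r : ℝ) : ℝ :=
  ∫ t in Set.Ioi (0:ℝ),
    exp (-(exp t * r^2) / (2 * (exp (2 * t) - 1))) /
      (t ^ (s/2 + 1) * (1 - exp (-2 * t)) ^ ((N:ℝ)/2))

lemma mehler_key (N : ℕ) (s : ℝ) (x y : EuclideanSpace ℝ (Fin N)) {t : ℝ} (ht : 0 < t) :
    mehler N t x y / t ^ (s/2 + 1)
      = exp (exp (-t) * (‖x‖^2 + ‖y‖^2) / (2 * (1 + exp (-t)))) *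
        (exp (-(exp t * ‖x - y‖^2) / (2 * (exp (2 * t) - 1))) /
          (t ^ (s/2 + 1) * (1 - exp (-2 * t)) ^ ((N:ℝ)/2))) := by
  have hb : (0:ℝ) < 1 - exp (-2 * t) := by
    have : exp (-2 * t) < 1 := exp_lt_one_iff.2 (by linarith)
    linarith
  have hrpow : (1 - exp (-2 * t)) ^ (-(N:ℝ)/2)
      = ((1 - exp (-2 * t)) ^ ((N:ℝ)/2))⁻¹ := by
    rw [neg_div, Real.rpow_neg hb.le]
  set a := exp (-t) with ha_def
  have ha : 0 < a := exp_pos _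
  have ha1 : a < 1 := exp_lt_one_iff.2 (by linarith)
  have he2 : exp (-2 * t) = a ^ 2 := by
    rw [ha_def, ← Real.exp_nat_mul]; ring_nf
  have het : exp t = a⁻¹ := by
    rw [ha_def, ← Real.exp_neg, neg_neg]
  have he2t : exp (2 * t) = (a ^ 2)⁻¹ := by
    rw [ha_def, ← Real.exp_nat_mul, ← Real.exp_neg]; ring_nf
  rw [mehler, hrpow, he2, het, he2t, ← ha_def]
  have hE : -(a ^ 2 * ‖x‖ ^ 2 - 2 * a * ⟪x, y⟫ + a ^ 2 * ‖y‖ ^ 2) / (2 * (1 - a ^ 2))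
      = a * (‖x‖ ^ 2 + ‖y‖ ^ 2) / (2 * (1 + a))
        + -(a⁻¹ * ‖x - y‖ ^ 2) / (2 * ((a ^ 2)⁻¹ - 1)) := by
    have hexy : ‖x - y‖^2 = ‖x‖^2 - 2*⟪x,y⟫ + ‖y‖^2 := by
      rw [norm_sub_sq_real]
    rw [hexy]
    set P := ‖x‖^2; set Q := ‖y‖^2; set I := ⟪x,y⟫
    have h1 : 1 - a^2 ≠ 0 := by nlinarith
    have h2 : (1:ℝ) + a ≠ 0 := by nlinarith
    have h3 : (a^2)⁻¹ - 1 ≠ 0 := by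
      have h4 : a^2 < 1 := by nlinarith
      have : 1 < (a^2)⁻¹ := one_lt_inv₀ (by positivity) |>.2 h4
      linarith
    field_simp
    ring
  rw [hE, Real.exp_add]
  have hne1 : t ^ (s/2 + 1) ≠ 0 := by positivity
  have hne2 : (1 - a ^ 2) ^ ((N:ℝ)/2) ≠ 0 := by
    have : (0:ℝ) < 1 - a ^ 2 := by nlinarith
    positivity
  field_simp

lemma mehler_meas (N : ℕ) (s : ℝ) (x y : EuclideanSpace ℝ (Fin N)) :
    Measurable (fun t : ℝ => mehler N t x y / t ^ (s/2 + 1)) := by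
  unfold mehler
  fun_prop

lemma rad_meas (N : ℕ) (s r : ℝ) :
    Measurable (fun t : ℝ =>
      exp (-(exp t * r^2) / (2 * (exp (2 * t) - 1))) /
        (t ^ (s/2 + 1) * (1 - exp (-2 * t)) ^ ((N:ℝ)/2))) := by
  fun_prop

theorem fracKernel_upper_bound (N : ℕ) (s : ℝ) (hs : s ∈ Set.Ioo (0:ℝ) 1)
    (x y : EuclideanSpace ℝ (Fin N)) :
    fracKernel N s x y ≤ exp (‖x‖^2 / 4) * exp (‖y‖^2 / 4) * radKernel N s ‖x - y‖ := by
  set C : ℝ := exp (‖x‖^2 / 4) * exp (‖y‖^2 / 4) with hC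
  have hCeq : C = exp (‖x‖^2 / 4 + ‖y‖^2 / 4) := (Real.exp_add _ _).symm
  set f : ℝ → ℝ := fun t => mehler N t x y / t ^ (s/2 + 1) with hf
  set g : ℝ → ℝ := fun t =>
    exp (-(exp t * ‖x - y‖^2) / (2 * (exp (2 * t) - 1))) /
      (t ^ (s/2 + 1) * (1 - exp (-2 * t)) ^ ((N:ℝ)/2)) with hg
  have hg_nonneg : ∀ t ∈ Set.Ioi (0:ℝ), 0 ≤ g t := by
    intro t ht
    rw [Set.mem_Ioi] at ht
    have hb : (0:ℝ) < 1 - exp (-2 * t) := by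
      have : exp (-2 * t) < 1 := exp_lt_one_iff.2 (by linarith)
      linarith
    have : (0:ℝ) < t ^ (s/2 + 1) * (1 - exp (-2 * t)) ^ ((N:ℝ)/2) := by
      positivity
    exact le_of_lt (div_pos (exp_pos _) this)
  have hfg : ∀ t ∈ Set.Ioi (0:ℝ), g t ≤ f t ∧ f t ≤ C * g t := by
    intro t ht
    rw [Set.mem_Ioi] at ht
    have hkey := mehler_key N s x y ht
    have ha : 0 < exp (-t) := exp_pos _
    have ha1 : exp (-t) < 1 := exp_lt_one_iff.2 (by linarith)
    have hD0 : 0 ≤ exp (-t) * (‖x‖^2 + ‖y‖^2) / (2 * (1 + exp (-t))) := by positivity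
    have hD1 : exp (-t) * (‖x‖^2 + ‖y‖^2) / (2 * (1 + exp (-t))) ≤ ‖x‖^2 / 4 + ‖y‖^2 / 4 := by
      rw [div_le_iff₀ (by positivity)]
      nlinarith [sq_nonneg ‖x‖, sq_nonneg ‖y‖, exp_pos (-t), ha1]
    constructor
    · rw [hf]; simp only; rw [hkey]
      nth_rewrite 1 [show g t = 1 * g t by ring]
      exact mul_le_mul_of_nonneg_right (by simpa using Real.exp_le_exp.2 hD0 |>.trans_eq' (Real.exp_zero)) (hg_nonneg t ht)
    · rw [hf]; simp only; rw [hkey, hCeq]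
      exact mul_le_mul_of_nonneg_right (Real.exp_le_exp.2 hD1) (hg_nonneg t (Set.mem_Ioi.2 ht))
  have hf_nonneg : ∀ t ∈ Set.Ioi (0:ℝ), 0 ≤ f t := fun t ht =>
    (hg_nonneg t ht).trans (hfg t ht).1
  have hfm := (mehler_meas N s x y).aestronglyMeasurable.restrict (μ := volume) (s := Set.Ioi 0)
  have hgm := (rad_meas N s ‖x - y‖).aestronglyMeasurable.restrict (μ := volume) (s := Set.Ioi 0)
  have hfrac : fracKernel N s x y = ∫ t in Set.Ioi (0:ℝ), f t := rfl
  have hrad : radKernel N s ‖x - y‖ = ∫ t in Set.Ioi (0:ℝ), g t := rfl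
  by_cases hgi : IntegrableOn g (Set.Ioi (0:ℝ)) volume
  · have hfi : IntegrableOn f (Set.Ioi (0:ℝ)) volume := by
      apply Integrable.mono' (hgi.const_mul C) hfm
      filter_upwards [ae_restrict_mem measurableSet_Ioi] with t ht
      show ‖f t‖ ≤ C * g t
      rw [Real.norm_eq_abs, abs_of_nonneg (hf_nonneg t ht)]
      exact (hfg t ht).2
    rw [hfrac, hrad, ← integral_const_mul]
    exact setIntegral_mono_on hfi (hgi.const_mul C) measurableSet_Ioi
      (fun t ht => (hfg t ht).2)
  · have hfi : ¬ IntegrableOn f (Set.Ioi (0:ℝ)) volume := by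
      intro hfi
      apply hgi
      apply Integrable.mono' hfi hgm
      filter_upwards [ae_restrict_mem measurableSet_Ioi] with t ht
      show ‖g t‖ ≤ f t
      rw [Real.norm_eq_abs, abs_of_nonneg (hg_nonneg t ht)]
      exact (hfg t ht).1
    rw [hfrac, hrad, integral_undef hfi, integral_undef hgi, mul_zero]
end
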